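/- For every positive integer n, √(2πn) (n/e)^n e^{1/(12n+1)} ≤ n! ≤ √(2πn) (n/e)^n e^{1/(12n)}. -/

import Mathlib

open Real Filter Topology Finset Stirling

private lemma geo_succ {r : ℝ} (h0 : 0 ≤ r) (h1 : r < 1) :
    HasSum (fun k : ℕ => r ^ (k + 1)) (r / (1 - r)) := by
  have := (hasSum_geometric_of_lt_one h0 h1).mul_left r
  simp_rw [← _root_.pow_succ'] at this
  rwa [← div_eq_mul_inv] at this

lemma robbins_diff_upper (m : ℕ) :
    Real.log (stirlingSeq (m + 1)) - Real.log (stirlingSeq (m + 2)) ≤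
      1 / (12 * ((m : ℝ) + 1)) - 1 / (12 * ((m : ℝ) + 2)) := by
  set s : ℝ := (1 / (2 * ((m : ℕ) + 1 : ℕ) + 1 : ℝ)) ^ 2 with hs
  have hm : (0:ℝ) ≤ (m : ℝ) := Nat.cast_nonneg m
  have hsval : s = 1 / (2 * (m:ℝ) + 3) ^ 2 := by
    rw [hs, div_pow, one_pow]
    congr 1
    push_cast; ring
  have hs0 : 0 ≤ s := sq_nonneg _
  have hs1 : s < 1 := by
    rw [hsval, div_lt_one (by positivity)]; nlinarith
  have hgeo : HasSum (fun k : ℕ => (1:ℝ)/3 * s ^ (k + 1)) (1/3 * (s / (1 - s))) :=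
    (geo_succ hs0 hs1).mul_left (1/3)
  have hle := hasSum_le (fun k : ℕ => ?_) (log_stirlingSeq_diff_hasSum m) hgeo
  · refine hle.trans_eq ?_
    have h1 : (0:ℝ) < (2 * (m:ℝ) + 3) ^ 2 - 1 := by nlinarith
    have h2 : (0:ℝ) < (2 * (m:ℝ) + 3) ^ 2 := by positivity
    have hval : (1:ℝ)/3 * (s / (1 - s)) = 1 / (3 * ((2 * (m:ℝ) + 3) ^ 2 - 1)) := by
      rw [hsval]
      rw [eq_div_iff (by positivity)]
      field_simp
    rw [hval, div_sub_div _ _ (by positivity) (by positivity),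
      div_eq_div_iff (by positivity) (by positivity)]
    ring
  · have h3 : (1:ℝ) / (2 * ((k + 1 : ℕ) : ℝ) + 1) ≤ 1/3 := by
      rw [div_le_div_iff₀ (by positivity) (by norm_num)]
      push_cast
      linarith [Nat.cast_nonneg (α := ℝ) k]
    exact mul_le_mul_of_nonneg_right h3 (pow_nonneg hs0 _)

lemma robbins_diff_lower (m : ℕ) :
    1 / (12 * ((m : ℝ) + 1) + 1) - 1 / (12 * ((m : ℝ) + 2) + 1) ≤
      Real.log (stirlingSeq (m + 1)) - Real.log (stirlingSeq (m + 2)) := by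
  set s : ℝ := (1 / (2 * ((m : ℕ) + 1 : ℕ) + 1 : ℝ)) ^ 2 with hs
  have hm : (0:ℝ) ≤ (m : ℝ) := Nat.cast_nonneg m
  have hsval : s = 1 / (2 * (m:ℝ) + 3) ^ 2 := by
    rw [hs, div_pow, one_pow]
    congr 1
    push_cast; ring
  have hs0 : 0 ≤ s := sq_nonneg _
  have hs1 : s / 3 < 1 := by
    rw [hsval, div_div, div_lt_one (by positivity)]; nlinarith
  have hs30 : 0 ≤ s / 3 := by positivity
  have hgeo : HasSum (fun k : ℕ => (s/3) ^ (k + 1)) ((s/3) / (1 - s/3)) :=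
    geo_succ hs30 hs1
  have hle := hasSum_le (fun k : ℕ => ?_) hgeo (log_stirlingSeq_diff_hasSum m)
  · refine le_trans ?_ hle
    have h1 : (0:ℝ) < 3 * (2 * (m:ℝ) + 3) ^ 2 - 1 := by nlinarith
    have hval : s/3 / (1 - s/3) = 1 / (3 * (2 * (m:ℝ) + 3) ^ 2 - 1) := by
      rw [hsval]
      have hpos : (0:ℝ) < 1 - 1 / (2 * (m:ℝ) + 3) ^ 2 / 3 := by
        rw [sub_pos, div_div, div_lt_one (by positivity)]
        nlinarith
      rw [div_eq_div_iff hpos.ne' (by positivity)]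
      field_simp
    rw [hval, div_sub_div _ _ (by positivity) (by positivity),
      div_le_div_iff₀ (by positivity) (by positivity)]
    nlinarith
  · have hp3 : 2 * (k+1) + 1 ≤ 3 ^ (k+1) := by
      induction k with
      | zero => norm_num
      | succ j ih =>
        have h9 := Nat.mul_le_mul_left 3 ih
        rw [pow_succ]
        omega
    have e : (s/3:ℝ)^(k+1) = (1/3)^(k+1) * s^(k+1) := by ring
    rw [e]
    refine mul_le_mul_of_nonneg_right ?_ (pow_nonneg hs0 _)
    rw [one_div_pow]
    refine one_div_le_one_div_of_le (by positivity) ?_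
    exact_mod_cast hp3


lemma robbins_tendsto_aux (m : ℕ) (c : ℝ) :
    Filter.Tendsto (fun N : ℕ => 1 / (12 * ((m : ℝ) + 1 + N) + c)) atTop (𝓝 0) := by
  have h1 : Filter.Tendsto (fun N : ℕ => 12 * ((m : ℝ) + 1 + N) + c) atTop atTop := by
    have h2 : Filter.Tendsto (fun N : ℕ => 12 * (N : ℝ)) atTop atTop :=
      (tendsto_natCast_atTop_atTop (R := ℝ)).const_mul_atTop (by norm_num)
    have h3 := tendsto_atTop_add_const_right atTop (12 * ((m : ℝ) + 1) + c) h2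
    refine h3.congr fun N => by ring
  simpa only [one_div, Pi.inv_def] using h1.inv_tendsto_atTop

lemma robbins_log_bounds (m : ℕ) :
    Real.log (Real.sqrt π) + 1 / (12 * ((m : ℝ) + 1) + 1) ≤ Real.log (stirlingSeq (m + 1)) ∧
      Real.log (stirlingSeq (m + 1)) ≤ Real.log (Real.sqrt π) + 1 / (12 * ((m : ℝ) + 1)) := by
  have hlim : Filter.Tendsto (fun N : ℕ => Real.log (stirlingSeq (m + 1 + N))) atTop
      (𝓝 (Real.log (Real.sqrt π))) := by
    have h1 : Filter.Tendsto (fun N : ℕ => m + 1 + N) atTop atTop := by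
      simpa [Nat.add_comm] using tendsto_add_atTop_nat (m + 1)
    exact ((Real.continuousAt_log (Real.sqrt_pos.mpr Real.pi_pos).ne').tendsto.comp
      (tendsto_stirlingSeq_sqrt_pi.comp h1))
  constructor
  · -- lower bound
    have key : ∀ N : ℕ, Real.log (stirlingSeq (m + 1 + N))
        + (1 / (12 * ((m : ℝ) + 1) + 1) - 1 / (12 * ((m : ℝ) + 1 + N) + 1))
        ≤ Real.log (stirlingSeq (m + 1)) := by
      intro N
      induction N with
      | zero => simp
      | succ N ih =>
        refine le_trans ?_ ih
        have hd := robbins_diff_lower (m + N)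
        push_cast at hd ⊢
        have hidx1 : m + 1 + (N + 1) = m + N + 2 := by omega
        have hidx2 : m + 1 + N = m + N + 1 := by omega
        rw [hidx1, hidx2]
        have : (m : ℝ) + 1 + N = (m : ℝ) + N + 1 := by ring
        rw [this]
        have : (m : ℝ) + 1 + (N + 1) = (m : ℝ) + N + 2 := by ring
        rw [this]
        linarith
    have hlim2 : Filter.Tendsto (fun N : ℕ => Real.log (stirlingSeq (m + 1 + N))
        + (1 / (12 * ((m : ℝ) + 1) + 1) - 1 / (12 * ((m : ℝ) + 1 + N) + 1))) atTop
        (𝓝 (Real.log (Real.sqrt π) + (1 / (12 * ((m : ℝ) + 1) + 1) - 0))) :=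
      hlim.add (tendsto_const_nhds.sub (robbins_tendsto_aux m 1))
    have := le_of_tendsto hlim2 (Filter.Eventually.of_forall key)
    linarith
  · -- upper bound
    have key : ∀ N : ℕ, Real.log (stirlingSeq (m + 1)) ≤ Real.log (stirlingSeq (m + 1 + N))
        + (1 / (12 * ((m : ℝ) + 1)) - 1 / (12 * ((m : ℝ) + 1 + N))) := by
      intro N
      induction N with
      | zero => simp
      | succ N ih =>
        refine le_trans ih ?_
        have hd := robbins_diff_upper (m + N)
        push_cast at hd ⊢
        have hidx1 : m + 1 + (N + 1) = m + N + 2 := by omega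
        have hidx2 : m + 1 + N = m + N + 1 := by omega
        rw [hidx1, hidx2]
        have : (m : ℝ) + 1 + N = (m : ℝ) + N + 1 := by ring
        rw [this]
        have : (m : ℝ) + 1 + (N + 1) = (m : ℝ) + N + 2 := by ring
        rw [this]
        linarith
    have hc : Filter.Tendsto (fun N : ℕ => 1 / (12 * ((m : ℝ) + 1 + N))) atTop (𝓝 0) := by
      simpa using robbins_tendsto_aux m 0
    have hlim2 : Filter.Tendsto (fun N : ℕ => Real.log (stirlingSeq (m + 1 + N))
        + (1 / (12 * ((m : ℝ) + 1)) - 1 / (12 * ((m : ℝ) + 1 + N)))) atTop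
        (𝓝 (Real.log (Real.sqrt π) + (1 / (12 * ((m : ℝ) + 1)) - 0))) :=
      hlim.add (tendsto_const_nhds.sub hc)
    have := ge_of_tendsto hlim2 (Filter.Eventually.of_forall key)
    linarith

/-- Robbins' refinement of Stirling's formula:
√(2πn) (n/e)^n e^{1/(12n+1)} ≤ n! ≤ √(2πn) (n/e)^n e^{1/(12n)} for all positive n. -/
theorem robbins_stirling (n : ℕ) (hn : 0 < n) :
    Real.sqrt (2 * Real.pi * n) * ((n : ℝ) / Real.exp 1) ^ n
        * Real.exp (1 / (12 * (n : ℝ) + 1)) ≤ (Nat.factorial n : ℝ)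
    ∧ (Nat.factorial n : ℝ) ≤ Real.sqrt (2 * Real.pi * n) * ((n : ℝ) / Real.exp 1) ^ n
        * Real.exp (1 / (12 * (n : ℝ))) := by
  obtain ⟨m, rfl⟩ : ∃ m, n = m + 1 := ⟨n - 1, (Nat.succ_pred_eq_of_pos hn).symm⟩
  have hst : 0 < stirlingSeq (m + 1) := stirlingSeq'_pos m
  obtain ⟨hlb, hub⟩ := robbins_log_bounds m
  have hcast : ((m + 1 : ℕ) : ℝ) = (m : ℝ) + 1 := by push_cast; ring
  -- exponentiate
  have hsqrtpi : (0:ℝ) < Real.sqrt π := Real.sqrt_pos.mpr Real.pi_pos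
  have hL : Real.sqrt π * Real.exp (1 / (12 * ((m:ℝ) + 1) + 1)) ≤ stirlingSeq (m + 1) := by
    have := Real.exp_le_exp.mpr hlb
    rwa [Real.exp_add, Real.exp_log hsqrtpi, Real.exp_log hst] at this
  have hU : stirlingSeq (m + 1) ≤ Real.sqrt π * Real.exp (1 / (12 * ((m:ℝ) + 1))) := by
    have := Real.exp_le_exp.mpr hub
    rwa [Real.exp_add, Real.exp_log hsqrtpi, Real.exp_log hst] at this
  -- factorial identity
  have hden : (0:ℝ) < Real.sqrt (2 * ((m + 1 : ℕ) : ℝ)) * (((m + 1 : ℕ) : ℝ) / Real.exp 1) ^ (m + 1) := by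
    have : (0:ℝ) < ((m + 1 : ℕ) : ℝ) := by positivity
    positivity
  have hfact : ((m + 1).factorial : ℝ)
      = stirlingSeq (m + 1) * (Real.sqrt (2 * ((m + 1 : ℕ) : ℝ)) * (((m + 1 : ℕ) : ℝ) / Real.exp 1) ^ (m + 1)) := by
    rw [stirlingSeq, div_mul_cancel₀ _ hden.ne']
  have hsq : Real.sqrt (2 * π * ((m + 1 : ℕ) : ℝ))
      = Real.sqrt π * Real.sqrt (2 * ((m + 1 : ℕ) : ℝ)) := by
    rw [← Real.sqrt_mul Real.pi_pos.le]
    ring_nf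
  constructor
  · rw [hfact, hsq]
    calc Real.sqrt π * Real.sqrt (2 * ((m + 1:ℕ) : ℝ)) * (((m + 1:ℕ) : ℝ) / Real.exp 1) ^ (m+1)
          * Real.exp (1 / (12 * ((m + 1 : ℕ) : ℝ) + 1))
        = (Real.sqrt π * Real.exp (1 / (12 * ((m:ℝ) + 1) + 1)))
          * (Real.sqrt (2 * ((m + 1:ℕ) : ℝ)) * (((m + 1:ℕ) : ℝ) / Real.exp 1) ^ (m+1)) := by
          rw [hcast]; ring
      _ ≤ stirlingSeq (m + 1)
          * (Real.sqrt (2 * ((m + 1:ℕ) : ℝ)) * (((m + 1:ℕ) : ℝ) / Real.exp 1) ^ (m+1)) :=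
          mul_le_mul_of_nonneg_right hL hden.le
  · rw [hfact, hsq]
    calc stirlingSeq (m + 1)
          * (Real.sqrt (2 * ((m + 1:ℕ) : ℝ)) * (((m + 1:ℕ) : ℝ) / Real.exp 1) ^ (m+1))
        ≤ (Real.sqrt π * Real.exp (1 / (12 * ((m:ℝ) + 1))))
          * (Real.sqrt (2 * ((m + 1:ℕ) : ℝ)) * (((m + 1:ℕ) : ℝ) / Real.exp 1) ^ (m+1)) :=
          mul_le_mul_of_nonneg_right hU hden.le
      _ = Real.sqrt π * Real.sqrt (2 * ((m + 1:ℕ) : ℝ)) * (((m + 1:ℕ) : ℝ) / Real.exp 1) ^ (m+1)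
          * Real.exp (1 / (12 * ((m + 1 : ℕ) : ℝ))) := by
          rw [hcast]; ring
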